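/- (Aliasing error bound for the DFT restricted to low modes.) Let v ∈ H^s(T^d) with s > d/2, N an integer with N > 1, and K an integer with 1 ≤ K < N/2. Define E(k) = DFT(v)(k) − v̂(k) for k ∈ [[K]]^d. Then (∑_{k ∈ [[K]]^d} |E(k)|²)^{1/2} ≤ α_{d,s} N^{−s} ‖v‖_{H^s}, where α_{d,s}² = (4d)^s ∑_{ℓ ∈ Z^d∖{0}} |ℓ|^{−2s}. -/

import Mathlib

open scoped BigOperators
open MeasureTheory Finset Filter

noncomputable section

/-- The symmetric frequency index set `[[N]]`, with `N` elements. -/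
def symmSet (N : ℕ) : Finset ℤ := Finset.Icc (-((N / 2 : ℕ) : ℤ)) (((N - 1) / 2 : ℕ) : ℤ)

/-- The symmetric frequency index set `[[N]]^d`. -/
def symmPi (d N : ℕ) : Finset (Fin d → ℤ) := Fintype.piFinset fun _ => symmSet N

/-- Grid point `x_n = n / N` on the torus, for `n ∈ [N]^d`. -/
def gridPt (d N : ℕ) (n : Fin d → Fin N) : Fin d → ℝ := fun i => (n i : ℝ) / (N : ℝ)

/-- The unit cube `[0,1]^d`, a fundamental domain for the torus `T^d`. -/
def cube (d : ℕ) : Set (Fin d → ℝ) := Set.univ.pi fun _ => Set.Icc (0 : ℝ) 1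

/-- The complex exponential `e^{2 π i ⟨k, x⟩}`. -/
def fexp (d : ℕ) (k : Fin d → ℤ) (x : Fin d → ℝ) : ℂ :=
  Complex.exp (2 * (Real.pi : ℂ) * Complex.I * ∑ i, (k i : ℂ) * (x i : ℂ))

/-- Discrete Fourier transform of grid values: `DFT(v)(k) = N^{-d} ∑_n v(x_n) e^{-2πi⟨k,x_n⟩}`. -/
def dft (d N : ℕ) (v : (Fin d → Fin N) → ℂ) (k : Fin d → ℤ) : ℂ :=
  ((N : ℂ) ^ d)⁻¹ * ∑ n : Fin d → Fin N, v n * fexp d (-k) (gridPt d N n)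

/-- Continuous Fourier coefficient `v̂(k) = ∫_{T^d} v(x) e^{-2πi⟨k,x⟩} dx`. -/
def fcoef (d : ℕ) (f : (Fin d → ℝ) → ℂ) (k : Fin d → ℤ) : ℂ :=
  ∫ x in cube d, f x * fexp d (-k) x

/-- Squared Euclidean norm `|k|²` of an integer vector. -/
def sqnormZ (d : ℕ) (k : Fin d → ℤ) : ℝ := ∑ i, ((k i : ℝ)) ^ 2

/-- One-dimensional character sum over the grid. -/
lemma char_sum_one (N : ℕ) (hN : 0 < N) (m : ℤ) :
    ∑ j : Fin N, Complex.exp (2 * (Real.pi : ℂ) * Complex.I * ((m : ℂ) * ((j : ℝ) : ℂ) / (N : ℂ)))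
      = if (N : ℤ) ∣ m then (N : ℂ) else 0 := by
  have hNC : (N : ℂ) ≠ 0 := Nat.cast_ne_zero.mpr hN.ne'
  set c : ℂ := Complex.exp (2 * (Real.pi : ℂ) * Complex.I * ((m : ℂ) / (N : ℂ))) with hc
  have hterm : ∀ j : Fin N,
      Complex.exp (2 * (Real.pi : ℂ) * Complex.I * ((m : ℂ) * ((j : ℝ) : ℂ) / (N : ℂ))) = c ^ (j : ℕ) := by
    intro j
    rw [hc, ← Complex.exp_nat_mul]
    congr 1
    push_cast
    ring
  rw [Finset.sum_congr rfl (fun j _ => hterm j)]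
  rw [Fin.sum_univ_eq_sum_range (fun j => c ^ j) N]
  by_cases h : (N : ℤ) ∣ m
  · obtain ⟨t, ht⟩ := h
    have hc1 : c = 1 := by
      rw [hc, show 2 * (Real.pi : ℂ) * Complex.I * ((m : ℂ) / (N : ℂ))
            = (t : ℂ) * (2 * (Real.pi : ℂ) * Complex.I) by
        rw [ht]; push_cast; field_simp]
      exact Complex.exp_int_mul_two_pi_mul_I t
    rw [if_pos ⟨t, ht⟩]
    simp [hc1]
  · have hcN : c ^ N = 1 := by
      rw [hc, ← Complex.exp_nat_mul]
      rw [show (N : ℂ) * (2 * (Real.pi : ℂ) * Complex.I * ((m : ℂ) / (N : ℂ)))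
            = (m : ℂ) * (2 * (Real.pi : ℂ) * Complex.I) by field_simp]
      exact Complex.exp_int_mul_two_pi_mul_I m
    have h2 : (2 * (Real.pi : ℂ) * Complex.I) ≠ 0 := by
      simpa [mul_comm] using Complex.two_pi_I_ne_zero
    have hc1 : c ≠ 1 := by
      intro hc1
      rw [hc, Complex.exp_eq_one_iff] at hc1
      obtain ⟨n, hn⟩ := hc1
      apply h
      have hm : (m : ℂ) = ((n * N : ℤ) : ℂ) := by
        have : (2 * (Real.pi : ℂ) * Complex.I) * (m : ℂ)
            = (2 * (Real.pi : ℂ) * Complex.I) * ((n * N : ℤ) : ℂ) := by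
          field_simp at hn
          push_cast
          linear_combination (2 * (Real.pi : ℂ) * Complex.I) * hn
        exact mul_left_cancel₀ h2 this
      exact ⟨n, by rw [mul_comm]; exact_mod_cast hm⟩
    rw [geom_sum_eq hc1, hcN]
    simp [h]
/-- Multi-dimensional character sum over the grid. -/
lemma char_sum (d N : ℕ) (hN : 0 < N) (m : Fin d → ℤ) :
    ∑ n : Fin d → Fin N, fexp d m (gridPt d N n)
      = if ∀ i, (N : ℤ) ∣ m i then ((N : ℂ) ^ d) else 0 := by
  have hfact : ∀ n : Fin d → Fin N, fexp d m (gridPt d N n)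
      = ∏ i, Complex.exp (2 * (Real.pi : ℂ) * Complex.I * ((m i : ℂ) * (((n i : ℕ) : ℝ) : ℂ) / (N : ℂ))) := by
    intro n
    rw [fexp, Finset.mul_sum, Complex.exp_sum]
    refine Finset.prod_congr rfl fun i _ => ?_
    congr 1
    rw [gridPt]
    push_cast
    ring
  rw [Finset.sum_congr rfl (fun n _ => hfact n)]
  have := Finset.prod_univ_sum (fun _ : Fin d => (Finset.univ : Finset (Fin N)))
    (fun i j => Complex.exp (2 * (Real.pi : ℂ) * Complex.I * ((m i : ℂ) * (((j : ℕ) : ℝ) : ℂ) / (N : ℂ))))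
  rw [Fintype.piFinset_univ] at this
  rw [← this]
  rw [Finset.prod_congr rfl (fun i _ => char_sum_one N hN (m i))]
  by_cases h : ∀ i, (N : ℤ) ∣ m i
  · rw [if_pos h, Finset.prod_congr rfl (fun i _ => if_pos (h i)), Finset.prod_const,
      Finset.card_univ, Fintype.card_fin]
  · rw [if_neg h]
    push_neg at h
    obtain ⟨i, hi⟩ := h
    exact Finset.prod_eq_zero (Finset.mem_univ i) (if_neg hi)
/-- One-dimensional summability. -/
lemma summable_one_dim {t : ℝ} (ht : 1 / 2 < t) :
    Summable fun n : ℤ => ((1 + (n : ℝ) ^ 2) ^ t)⁻¹ := by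
  have h2t : 1 < 2 * t := by linarith
  refine Summable.of_norm_bounded_eventually (g := fun n : ℤ => |(n : ℝ)| ^ (-(2 * t)))
    (Real.summable_abs_int_rpow h2t) ?_
  have : {n : ℤ | ¬ ‖((1 + (n : ℝ) ^ 2) ^ t)⁻¹‖ ≤ |(n : ℝ)| ^ (-(2 * t))} ⊆ {0} := by
    intro n hn
    simp only [Set.mem_setOf_eq] at hn
    by_contra h0
    apply hn
    have hn0 : (1 : ℝ) ≤ |(n : ℝ)| := by
      have : n ≠ 0 := fun h => h0 (by simpa using h)
      exact_mod_cast Int.one_le_abs (by simpa using this)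
    have key : |(n : ℝ)| ^ (2 * t) = ((n : ℝ) ^ 2) ^ t := by
      rw [← sq_abs, ← Real.rpow_natCast |(n : ℝ)| 2, ← Real.rpow_mul (abs_nonneg _)]
      norm_num
    have hx2 : (1 : ℝ) ≤ (n : ℝ) ^ 2 := by nlinarith [sq_abs ((n:ℤ):ℝ), sq_nonneg (|((n:ℤ):ℝ)| - 1)]
    rw [Real.norm_eq_abs, abs_of_nonneg (by positivity), Real.rpow_neg (abs_nonneg _), key]
    exact inv_anti₀ (Real.rpow_pos_of_pos (by linarith) t)
      (Real.rpow_le_rpow (by linarith) (by linarith) (by linarith))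
  exact Set.Finite.subset (Set.finite_singleton 0) this
/-- Summability of products over `ℤ^d`. -/
lemma summable_pi_prod (d : ℕ) (g : ℤ → ℝ) (hg : Summable g) (h0 : ∀ n, 0 ≤ g n) :
    Summable fun k : Fin d → ℤ => ∏ i, g (k i) := by
  induction d with
  | zero =>
      haveI : Finite (Fin 0 → ℤ) := Finite.of_subsingleton
      exact Summable.of_finite
  | succ d ih =>
      rw [← (Fin.consEquiv (fun _ : Fin (d + 1) => ℤ)).summable_iff]
      have heq : ((fun k : Fin (d + 1) → ℤ => ∏ i, g (k i)) ∘ (Fin.consEquiv (fun _ : Fin (d + 1) => ℤ)))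
          = fun p : ℤ × (Fin d → ℤ) => g p.1 * ∏ i, g (p.2 i) := by
        funext p
        simp [Fin.consEquiv_apply, Fin.prod_univ_succ]
      rw [heq]
      have := Summable.mul_of_nonneg hg ih (fun n => h0 n)
        (fun k => Finset.prod_nonneg fun i _ => h0 _)
      exact this
/-- Summability of the inverse Sobolev weight over `ℤ^d` when `s > d/2`. -/
lemma summable_weight_inv (d : ℕ) (hd : 0 < d) (s : ℝ) (hs : s > (d : ℝ) / 2) :
    Summable fun k : Fin d → ℤ => (1 + sqnormZ d k ^ s)⁻¹ := by
  have hdR : (0 : ℝ) < d := Nat.cast_pos.mpr hd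
  have hs0 : 0 < s := lt_of_le_of_lt (by positivity) hs
  set t : ℝ := s / d with htdef
  have ht : 1 / 2 < t := by rw [htdef, lt_div_iff₀ hdR]; linarith [hs]
  have ht0 : 0 < t := by linarith
  have hg := summable_one_dim ht
  have hsum : Summable fun k : Fin d → ℤ => (2 : ℝ) ^ s * ∏ i, ((1 + ((k i : ℤ) : ℝ) ^ 2) ^ t)⁻¹ :=
    (summable_pi_prod d _ hg (fun n => inv_nonneg.mpr (Real.rpow_nonneg (by positivity) t))).mul_left _
  refine Summable.of_nonneg_of_le (fun k => inv_nonneg.mpr (add_nonneg zero_le_one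
    (Real.rpow_nonneg (Finset.sum_nonneg fun i _ => sq_nonneg _) s))) (fun k => ?_) hsum
  set Q : ℝ := sqnormZ d k with hQdef
  have hQ0 : 0 ≤ Q := Finset.sum_nonneg fun i _ => sq_nonneg _
  have hP : ∀ i : Fin d, (0:ℝ) < (1 + ((k i : ℤ) : ℝ) ^ 2) ^ t :=
    fun i => Real.rpow_pos_of_pos (by positivity) t
  have hprodpos : (0:ℝ) < ∏ i, (1 + ((k i : ℤ) : ℝ) ^ 2) ^ t :=
    Finset.prod_pos fun i _ => hP i
  -- step 1 : ∏ (1+k_i²)^t ≤ (1+Q)^s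
  have step1 : (∏ i, (1 + ((k i : ℤ) : ℝ) ^ 2) ^ t) ≤ (1 + Q) ^ s := by
    have h1 : (∏ i, (1 + ((k i : ℤ) : ℝ) ^ 2)) ≤ (1 + Q) ^ (d : ℕ) := by
      calc (∏ i, (1 + ((k i : ℤ) : ℝ) ^ 2)) ≤ ∏ _i : Fin d, (1 + Q) := by
            refine Finset.prod_le_prod (fun i _ => by positivity) (fun i _ => ?_)
            have : ((k i : ℤ) : ℝ) ^ 2 ≤ Q :=
              Finset.single_le_sum (f := fun j => ((k j : ℤ) : ℝ) ^ 2)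
                (fun j _ => sq_nonneg _) (Finset.mem_univ i)
            linarith
        _ = (1 + Q) ^ (d : ℕ) := by rw [Finset.prod_const, Finset.card_univ, Fintype.card_fin]
    calc (∏ i, (1 + ((k i : ℤ) : ℝ) ^ 2) ^ t)
        = (∏ i, (1 + ((k i : ℤ) : ℝ) ^ 2)) ^ t := by
          rw [← Real.finset_prod_rpow _ _ (fun i _ => by positivity)]
      _ ≤ ((1 + Q) ^ (d : ℕ)) ^ t := by
          exact Real.rpow_le_rpow (Finset.prod_nonneg fun i _ => by positivity) h1 ht0.le
      _ = (1 + Q) ^ ((d : ℝ) * t) := by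
          rw [← Real.rpow_natCast (1 + Q) d, ← Real.rpow_mul (by linarith)]
      _ = (1 + Q) ^ s := by rw [htdef]; congr 1; field_simp
  -- step 2 : (1+Q)^s ≤ 2^s * (1 + Q^s)
  have step2 : (1 + Q) ^ s ≤ (2 : ℝ) ^ s * (1 + Q ^ s) := by
    have hm : 1 + Q ≤ 2 * max 1 Q := by
      rcases max_cases 1 Q with ⟨h1, h2⟩ | ⟨h1, h2⟩ <;> rw [h1] <;> linarith
    calc (1 + Q) ^ s ≤ (2 * max 1 Q) ^ s :=
          Real.rpow_le_rpow (by linarith) hm hs0.le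
      _ = (2 : ℝ) ^ s * (max 1 Q) ^ s := Real.mul_rpow (by norm_num) (le_max_of_le_left zero_le_one)
      _ ≤ (2 : ℝ) ^ s * (1 + Q ^ s) := by
          have : (max 1 Q) ^ s ≤ 1 + Q ^ s := by
            rcases max_cases 1 Q with ⟨h1, h2⟩ | ⟨h1, h2⟩ <;> rw [h1]
            · rw [Real.one_rpow]
              have : 0 ≤ Q ^ s := Real.rpow_nonneg hQ0 s
              linarith
            · have : 0 ≤ Q ^ s := Real.rpow_nonneg hQ0 s
              linarith
          have h2s : (0:ℝ) ≤ (2:ℝ) ^ s := (Real.rpow_pos_of_pos (by norm_num) s).le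
          nlinarith
  have chain : (∏ i, (1 + ((k i : ℤ) : ℝ) ^ 2) ^ t) ≤ (2 : ℝ) ^ s * (1 + Q ^ s) :=
    step1.trans step2
  have hW : (0:ℝ) < 1 + Q ^ s := by
    have : 0 ≤ Q ^ s := Real.rpow_nonneg hQ0 s
    linarith
  rw [Finset.prod_inv_distrib, inv_eq_one_div, inv_eq_one_div, mul_one_div,
    div_le_div_iff₀ hW hprodpos]
  linarith [chain]
lemma norm_fexp (d : ℕ) (k : Fin d → ℤ) (x : Fin d → ℝ) : ‖fexp d k x‖ = 1 := by
  rw [fexp]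
  have : 2 * (Real.pi : ℂ) * Complex.I * ∑ i, (k i : ℂ) * (x i : ℂ)
      = ((2 * Real.pi * ∑ i, (k i : ℝ) * x i : ℝ) : ℂ) * Complex.I := by
    push_cast
    ring
  rw [this, Complex.norm_exp_ofReal_mul_I]

lemma fexp_add (d : ℕ) (a b : Fin d → ℤ) (x : Fin d → ℝ) :
    fexp d a x * fexp d b x = fexp d (a + b) x := by
  rw [fexp, fexp, fexp, ← Complex.exp_add]
  congr 1
  rw [← mul_add, ← Finset.sum_add_distrib]
  congr 1
  refine Finset.sum_congr rfl fun i _ => ?_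
  simp only [Pi.add_apply]
  push_cast
  ring

lemma summable_norm_vhat (d : ℕ) (hd : 0 < d) (s : ℝ) (hs : s > (d : ℝ) / 2)
    (vhat : (Fin d → ℤ) → ℂ)
    (hHs : Summable fun k : Fin d → ℤ => (1 + sqnormZ d k ^ s) * ‖vhat k‖ ^ 2) :
    Summable fun k : Fin d → ℤ => ‖vhat k‖ := by
  have hw := summable_weight_inv d hd s hs
  have hsum : Summable fun k : Fin d → ℤ =>
      (1 / 2 : ℝ) * ((1 + sqnormZ d k ^ s) * ‖vhat k‖ ^ 2 + (1 + sqnormZ d k ^ s)⁻¹) :=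
    (hHs.add hw).mul_left _
  refine Summable.of_nonneg_of_le (fun k => norm_nonneg _) (fun k => ?_) hsum
  have hW : (0:ℝ) < 1 + sqnormZ d k ^ s := by
    have : (0:ℝ) ≤ sqnormZ d k ^ s :=
      Real.rpow_nonneg (Finset.sum_nonneg fun i _ => sq_nonneg _) s
    linarith
  set W : ℝ := 1 + sqnormZ d k ^ s with hWdef
  set a : ℝ := ‖vhat k‖ with hadef
  have ha : (0:ℝ) ≤ a := norm_nonneg _
  have h2W : (0:ℝ) < 2 * W := by linarith
  rw [show (1/2:ℝ) * (W * a^2 + W⁻¹) = (W^2*a^2+1)/(2*W) by field_simp]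
  rw [le_div_iff₀ h2W]
  nlinarith [sq_nonneg (W*a-1)]
lemma dft_alias (d N : ℕ) (hN : 0 < N)
    (v : (Fin d → ℝ) → ℂ) (vhat : (Fin d → ℤ) → ℂ)
    (hsum : Summable fun m : Fin d → ℤ => ‖vhat m‖)
    (hrep : ∀ x, v x = ∑' m : Fin d → ℤ, vhat m * fexp d m x)
    (k : Fin d → ℤ) :
    dft d N (fun n => v (gridPt d N n)) k = ∑' ℓ : Fin d → ℤ, vhat (k + N • ℓ) := by
  have hNC : ((N : ℂ) ^ d) ≠ 0 := pow_ne_zero _ (Nat.cast_ne_zero.mpr hN.ne')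
  have hsm : ∀ (c : Fin d → ℤ) (x : Fin d → ℝ),
      Summable fun m : Fin d → ℤ => vhat m * fexp d (m + c) x := by
    intro c x
    apply Summable.of_norm
    simp only [norm_mul, norm_fexp, mul_one]
    exact hsum
  have h1 : ∀ n : Fin d → Fin N,
      v (gridPt d N n) * fexp d (-k) (gridPt d N n)
        = ∑' m : Fin d → ℤ, vhat m * fexp d (m + (-k)) (gridPt d N n) := by
    intro n
    rw [hrep, ← tsum_mul_right]
    exact tsum_congr fun m => by rw [mul_assoc, fexp_add]
  rw [dft, Finset.sum_congr rfl fun n _ => h1 n]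
  rw [← Summable.tsum_finsetSum fun n _ => hsm (-k) (gridPt d N n)]
  have h2 : ∀ m : Fin d → ℤ,
      ((N : ℂ) ^ d)⁻¹ * ∑ n : Fin d → Fin N, vhat m * fexp d (m + (-k)) (gridPt d N n)
        = vhat m * (if ∀ i, (N : ℤ) ∣ (m + (-k)) i then 1 else 0) := by
    intro m
    rw [← Finset.mul_sum, char_sum d N hN (m + (-k))]
    by_cases h : ∀ i, (N : ℤ) ∣ (m + (-k)) i
    · rw [if_pos h, if_pos h, mul_one]
      field_simp
    · rw [if_neg h, if_neg h]
      simp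
  rw [← tsum_mul_left, tsum_congr h2]
  -- reindex over multiples
  set f : (Fin d → ℤ) → ℂ := fun m => vhat m * (if ∀ i, (N : ℤ) ∣ (m + (-k)) i then 1 else 0)
    with hf
  set ι : (Fin d → ℤ) → (Fin d → ℤ) := fun ℓ => k + N • ℓ with hι
  have hinj : Function.Injective ι := by
    intro a b hab
    funext i
    have := congrFun hab i
    simp only [hι, Pi.add_apply, Pi.smul_apply, nsmul_eq_mul, Pi.mul_apply, Pi.natCast_apply] at this
    have hN' : (N : ℤ) ≠ 0 := by exact_mod_cast hN.ne'
    exact mul_left_cancel₀ hN' (add_left_cancel this)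
  have hsupp : Function.support f ⊆ Set.range ι := by
    intro m hm
    have hdvd : ∀ i, (N : ℤ) ∣ (m + (-k)) i := by
      by_contra h
      apply hm
      rw [hf]
      simp only [if_neg h, mul_zero]
    refine ⟨fun i => (m i - k i) / N, ?_⟩
    funext i
    have h3 : (m i - k i) / (N : ℤ) * (N : ℤ) = m i - k i :=
      Int.ediv_mul_cancel (by simpa [sub_eq_add_neg] using hdvd i)
    simp only [hι, Pi.add_apply, Pi.smul_apply, nsmul_eq_mul, Pi.mul_apply, Pi.natCast_apply]
    linear_combination h3
  have hc : ∀ (ℓ : Fin d → ℤ) (i : Fin d), (N : ℤ) ∣ (ι ℓ + (-k)) i := by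
    intro ℓ i
    simp only [hι, Pi.add_apply, Pi.smul_apply, Pi.neg_apply, nsmul_eq_mul, Pi.mul_apply, Pi.natCast_apply]
    exact ⟨ℓ i, by ring⟩
  rw [← hinj.tsum_eq hsupp]
  refine tsum_congr fun ℓ => ?_
  show vhat (ι ℓ) * (if ∀ i, (N : ℤ) ∣ (ι ℓ + (-k)) i then 1 else 0) = vhat (k + N • ℓ)
  rw [if_pos (hc ℓ), mul_one]
lemma smul_add_injective (d N : ℕ) (hN : 0 < N) (k : Fin d → ℤ) :
    Function.Injective (fun ℓ : Fin d → ℤ => k + N • ℓ) := by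
  intro a b hab
  funext i
  have := congrFun hab i
  simp only [Pi.add_apply, Pi.smul_apply, nsmul_eq_mul] at this
  have hN' : (N : ℤ) ≠ 0 := by exact_mod_cast hN.ne'
  exact mul_left_cancel₀ hN' (add_left_cancel this)

lemma err_eq (d N : ℕ) (hN : 0 < N)
    (v : (Fin d → ℝ) → ℂ) (vhat : (Fin d → ℤ) → ℂ)
    (hsum : Summable fun m : Fin d → ℤ => ‖vhat m‖)
    (hrep : ∀ x, v x = ∑' m : Fin d → ℤ, vhat m * fexp d m x)
    (k : Fin d → ℤ) :
    dft d N (fun n => v (gridPt d N n)) k - vhat k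
      = ∑' ℓ : {ℓ : Fin d → ℤ // ℓ ≠ 0}, vhat (k + N • ℓ.1) := by
  set g : (Fin d → ℤ) → ℂ := fun ℓ => vhat (k + N • ℓ) with hg
  have hgs : Summable g := (Summable.of_norm hsum).comp_injective (smul_add_injective d N hN k)
  have h0 : g 0 = vhat k := by simp [hg]
  have hsplit := Summable.tsum_subtype_add_tsum_subtype_compl hgs ({0} : Set (Fin d → ℤ))
  rw [tsum_singleton (0 : Fin d → ℤ) g, h0] at hsplit
  have he : ∑' (x : ↥(({0} : Set (Fin d → ℤ))ᶜ)), g x.1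
      = ∑' ℓ : {ℓ : Fin d → ℤ // ℓ ≠ 0}, g ℓ.1 := by
    exact ((Equiv.subtypeEquivRight (fun x => by simp)).tsum_eq
      (fun ℓ : {ℓ : Fin d → ℤ // ℓ ≠ 0} => g ℓ.1))
  rw [dft_alias d N hN v vhat hsum hrep k, ← hsplit, ← he]
  ring
lemma sqnormZ_nonneg (d : ℕ) (k : Fin d → ℤ) : 0 ≤ sqnormZ d k :=
  Finset.sum_nonneg fun i _ => sq_nonneg _

lemma one_le_sqnormZ (d : ℕ) {ℓ : Fin d → ℤ} (hℓ : ℓ ≠ 0) : 1 ≤ sqnormZ d ℓ := by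
  obtain ⟨i, hi⟩ : ∃ i, ℓ i ≠ 0 := by
    by_contra h
    push_neg at h
    exact hℓ (funext h)
  have h1 : (1 : ℝ) ≤ ((ℓ i : ℤ) : ℝ) ^ 2 := by
    have : (1 : ℤ) ≤ (ℓ i) ^ 2 := by
      have h2 : 1 ≤ |ℓ i| := Int.one_le_abs hi
      nlinarith [sq_abs (ℓ i)]
    exact_mod_cast this
  calc (1:ℝ) ≤ ((ℓ i : ℤ) : ℝ) ^ 2 := h1
    _ ≤ sqnormZ d ℓ := Finset.single_le_sum (f := fun j => ((ℓ j : ℤ) : ℝ) ^ 2)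
        (fun j _ => sq_nonneg _) (Finset.mem_univ i)

lemma weight_bound (d N K : ℕ) (hd : 0 < d) (s : ℝ) (hs0 : 0 < s) (hK : 1 ≤ K)
    (hKN : 2 * K < N) (k : Fin d → ℤ) (hk : k ∈ symmPi d K) {ℓ : Fin d → ℤ} (hℓ : ℓ ≠ 0) :
    (1 + sqnormZ d (k + N • ℓ) ^ s)⁻¹
      ≤ (4 * (d : ℝ)) ^ s * ((N : ℝ) ^ (2 * s))⁻¹ * (sqnormZ d ℓ ^ s)⁻¹ := by
  have hNR : (0:ℝ) < N := by exact_mod_cast (by omega : 0 < N)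
  have habs : ∀ i, -(K : ℤ) ≤ k i ∧ k i ≤ (K : ℤ) := by
    intro i
    have := Fintype.mem_piFinset.mp hk i
    rw [symmSet, Finset.mem_Icc] at this
    omega
  -- coordinatewise bound
  have key : ∀ a b : ℝ, -(K : ℝ) ≤ a → a ≤ (K : ℝ) → 1 ≤ |b| →
      (N : ℝ) ^ 2 / 4 * b ^ 2 ≤ (a + (N : ℝ) * b) ^ 2 := by
    intro a b ha1 ha2 hb
    have hKN' : 2 * (K : ℝ) < (N : ℝ) := by exact_mod_cast hKN
    rcases abs_cases b with ⟨h1, h2⟩ | ⟨h1, h2⟩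
    · have hb1 : 1 ≤ b := h1 ▸ hb
      have hv : (N : ℝ) * b / 2 ≤ a + (N : ℝ) * b := by
        nlinarith [mul_nonneg hNR.le (sub_nonneg.mpr hb1)]
      have hv0 : 0 ≤ (N : ℝ) * b / 2 := by nlinarith
      nlinarith [mul_self_le_mul_self hv0 hv]
    · have hb1 : b ≤ -1 := by rw [h1] at hb; linarith
      have hv : a + (N : ℝ) * b ≤ (N : ℝ) * b / 2 := by
        nlinarith [mul_nonneg hNR.le (by linarith : (0:ℝ) ≤ -(b + 1))]
      have hv0 : (N : ℝ) * b / 2 ≤ 0 := by nlinarith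
      have := mul_self_le_mul_self (by linarith : (0:ℝ) ≤ -((N : ℝ) * b / 2))
        (by linarith : -((N : ℝ) * b / 2) ≤ -(a + (N : ℝ) * b))
      nlinarith [this]
  have hcoord : ∀ i, (N : ℝ) ^ 2 / 4 * ((ℓ i : ℤ) : ℝ) ^ 2 ≤ (((k + N • ℓ) i : ℤ) : ℝ) ^ 2 := by
    intro i
    have hki := habs i
    have happ : ((k + N • ℓ) i : ℤ) = k i + (N : ℤ) * ℓ i := by
      simp [nsmul_eq_mul]
    rw [happ]
    rcases eq_or_ne (ℓ i) 0 with h | h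
    · rw [h]
      push_cast
      nlinarith [sq_nonneg ((k i : ℝ) + (N : ℝ) * 0)]
    · have hb : 1 ≤ |((ℓ i : ℤ) : ℝ)| := by
        have := Int.one_le_abs h
        calc (1:ℝ) ≤ ((|ℓ i| : ℤ) : ℝ) := by exact_mod_cast this
          _ = |((ℓ i : ℤ) : ℝ)| := by push_cast; rfl
      have h1 : -(K : ℝ) ≤ ((k i : ℤ) : ℝ) := by exact_mod_cast hki.1
      have h2 : ((k i : ℤ) : ℝ) ≤ (K : ℝ) := by exact_mod_cast hki.2
      have := key ((k i : ℤ) : ℝ) ((ℓ i : ℤ) : ℝ) h1 h2 hb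
      push_cast
      push_cast at this
      linarith
  have hsumb : (N : ℝ) ^ 2 / 4 * sqnormZ d ℓ ≤ sqnormZ d (k + N • ℓ) := by
    rw [sqnormZ, sqnormZ, Finset.mul_sum]
    exact Finset.sum_le_sum fun i _ => hcoord i
  set Q : ℝ := sqnormZ d ℓ with hQ
  have hQ1 : 1 ≤ Q := one_le_sqnormZ d hℓ
  have hQ0 : 0 < Q := by linarith
  -- rpow bound
  have hrw : ((N : ℝ) ^ 2 / (4 * d)) ^ s * Q ^ s ≤ 1 + sqnormZ d (k + N • ℓ) ^ s := by
    have hb1 : ((N : ℝ) ^ 2 / (4 * d)) ^ s * Q ^ s = ((N : ℝ) ^ 2 / (4 * d) * Q) ^ s :=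
      (Real.mul_rpow (by positivity) (by positivity)).symm
    have hb2 : (N : ℝ) ^ 2 / (4 * d) * Q ≤ (N : ℝ) ^ 2 / 4 * Q := by
      have hd1 : (1 : ℝ) ≤ d := by exact_mod_cast hd
      have : (N : ℝ) ^ 2 / (4 * d) ≤ (N : ℝ) ^ 2 / 4 := by
        apply div_le_div_of_nonneg_left (by positivity) (by norm_num) (by nlinarith)
      nlinarith
    calc ((N : ℝ) ^ 2 / (4 * d)) ^ s * Q ^ s
        = ((N : ℝ) ^ 2 / (4 * d) * Q) ^ s := hb1
      _ ≤ (sqnormZ d (k + N • ℓ)) ^ s :=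
          Real.rpow_le_rpow (by positivity) (hb2.trans hsumb) hs0.le
      _ ≤ 1 + sqnormZ d (k + N • ℓ) ^ s := by linarith
  have hpos : (0:ℝ) < ((N : ℝ) ^ 2 / (4 * d)) ^ s * Q ^ s := by
    have hd0 : (0:ℝ) < d := by exact_mod_cast hd
    have := Real.rpow_pos_of_pos (show (0:ℝ) < (N:ℝ)^2/(4*d) by positivity) s
    have := Real.rpow_pos_of_pos hQ0 s
    positivity
  have hWpos : (0:ℝ) < 1 + sqnormZ d (k + N • ℓ) ^ s := lt_of_lt_of_le hpos hrw
  have hinv : (1 + sqnormZ d (k + N • ℓ) ^ s)⁻¹ ≤ (((N : ℝ) ^ 2 / (4 * d)) ^ s * Q ^ s)⁻¹ :=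
    inv_anti₀ hpos hrw
  refine hinv.trans (le_of_eq ?_)
  have hd0 : (0:ℝ) < d := by exact_mod_cast hd
  rw [mul_inv, Real.div_rpow (by positivity) (by positivity), ← Real.rpow_natCast (N:ℝ) 2,
    ← Real.rpow_mul (by positivity)]
  rw [inv_div]
  push_cast
  ring
lemma tsum_cauchy_schwarz {α : Type*} (f g : α → ℝ) (hf0 : ∀ a, 0 ≤ f a) (hg0 : ∀ a, 0 ≤ g a)
    (hf : Summable fun a => f a ^ 2) (hg : Summable fun a => g a ^ 2) :
    (∑' a, f a * g a) ^ 2 ≤ (∑' a, f a ^ 2) * (∑' a, g a ^ 2) := by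
  set A : ℝ := ∑' a, f a ^ 2 with hA
  set B : ℝ := ∑' a, g a ^ 2 with hB
  have hA0 : 0 ≤ A := tsum_nonneg fun a => sq_nonneg _
  have hB0 : 0 ≤ B := tsum_nonneg fun a => sq_nonneg _
  have hfg : Summable fun a => f a * g a := by
    refine Summable.of_nonneg_of_le (fun a => mul_nonneg (hf0 a) (hg0 a)) (fun a => ?_)
      ((hf.add hg).mul_left (1/2 : ℝ))
    nlinarith [sq_nonneg (f a - g a)]
  have hb : ∀ u : Finset α, ∑ a ∈ u, f a * g a ≤ Real.sqrt A * Real.sqrt B := by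
    intro u
    have h1 := Finset.sum_mul_sq_le_sq_mul_sq u f g
    have h2 : ∑ a ∈ u, f a ^ 2 ≤ A := Summable.sum_le_tsum u (fun a _ => sq_nonneg _) hf
    have h3 : ∑ a ∈ u, g a ^ 2 ≤ B := Summable.sum_le_tsum u (fun a _ => sq_nonneg _) hg
    have h4 : (∑ a ∈ u, f a * g a) ^ 2 ≤ A * B := by
      calc (∑ a ∈ u, f a * g a) ^ 2 ≤ (∑ a ∈ u, f a ^ 2) * ∑ a ∈ u, g a ^ 2 := h1
        _ ≤ A * B := by
            have := Finset.sum_nonneg (fun a (_ : a ∈ u) => sq_nonneg (f a))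
            have := Finset.sum_nonneg (fun a (_ : a ∈ u) => sq_nonneg (g a))
            apply mul_le_mul h2 h3 (by assumption) hA0
    have h5 : (0:ℝ) ≤ ∑ a ∈ u, f a * g a :=
      Finset.sum_nonneg fun a _ => mul_nonneg (hf0 a) (hg0 a)
    rw [← Real.sqrt_mul hA0 B]
    exact (Real.le_sqrt h5 (mul_nonneg hA0 hB0)).mpr h4
  have h6 : ∑' a, f a * g a ≤ Real.sqrt A * Real.sqrt B := Summable.tsum_le_of_sum_le hfg hb
  have h7 : (0:ℝ) ≤ ∑' a, f a * g a := tsum_nonneg fun a => mul_nonneg (hf0 a) (hg0 a)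
  calc (∑' a, f a * g a) ^ 2 ≤ (Real.sqrt A * Real.sqrt B) ^ 2 := by nlinarith [h6, h7]
    _ = A * B := by
        rw [mul_pow, Real.sq_sqrt hA0, Real.sq_sqrt hB0]
lemma symm_bounds (d K : ℕ) (k : Fin d → ℤ) (hk : k ∈ symmPi d K) :
    ∀ i, -(K : ℤ) ≤ k i ∧ k i ≤ (K : ℤ) := by
  intro i
  have := Fintype.mem_piFinset.mp hk i
  rw [symmSet, Finset.mem_Icc] at this
  omega

/-- Aliasing error bound for the DFT restricted to low modes: for `v ∈ H^s(T^d)`,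
`s > d/2`, `1 ≤ K < N/2`, the error `E(k) = DFT(v)(k) − v̂(k)`, `k ∈ [[K]]^d`, satisfies
`‖E‖_{ℓ²([[K]]^d)} ≤ α_{d,s} N^{-s} ‖v‖_{H^s}` with `α_{d,s}² = (4d)^s ∑_{ℓ≠0} |ℓ|^{-2s}`. -/
theorem dft_aliasing_error_bound (d : ℕ) (hd : 0 < d) (s : ℝ) (hs : s > (d : ℝ) / 2)
    (N K : ℕ) (hN : 1 < N) (hK : 1 ≤ K) (hKN : 2 * K < N)
    (v : (Fin d → ℝ) → ℂ) (vhat : (Fin d → ℤ) → ℂ)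
    (hHs : Summable fun k : Fin d → ℤ => (1 + sqnormZ d k ^ s) * ‖vhat k‖ ^ 2)
    (hrep : ∀ x, v x = ∑' k : Fin d → ℤ, vhat k * fexp d k x) :
    Real.sqrt (∑ k ∈ symmPi d K, ‖dft d N (fun n => v (gridPt d N n)) k - vhat k‖ ^ 2)
      ≤ Real.sqrt ((4 * (d : ℝ)) ^ s *
            ∑' ℓ : {ℓ : Fin d → ℤ // ℓ ≠ 0}, (sqnormZ d ℓ.1 ^ s)⁻¹)
        * (N : ℝ) ^ (-s)
        * Real.sqrt (∑' k : Fin d → ℤ, (1 + sqnormZ d k ^ s) * ‖vhat k‖ ^ 2) := by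
  have hs0 : 0 < s := lt_of_le_of_lt (by positivity) hs
  have hN0 : 0 < N := by omega
  have hnorm : Summable fun m : Fin d → ℤ => ‖vhat m‖ := summable_norm_vhat d hd s hs vhat hHs
  have hw := summable_weight_inv d hd s hs
  set W : (Fin d → ℤ) → ℝ := fun m => 1 + sqnormZ d m ^ s with hWdef
  have hWpos : ∀ m, 0 < W m := fun m => by
    have : (0:ℝ) ≤ sqnormZ d m ^ s := Real.rpow_nonneg (sqnormZ_nonneg d m) s
    simp only [hWdef]; linarith
  set H : ℝ := ∑' m : Fin d → ℤ, W m * ‖vhat m‖ ^ 2 with hHdef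
  have hH0 : 0 ≤ H := tsum_nonneg fun m => mul_nonneg (hWpos m).le (sq_nonneg _)
  -- summability over nonzero ℓ
  have hB : Summable fun ℓ : {ℓ : Fin d → ℤ // ℓ ≠ 0} => (sqnormZ d ℓ.1 ^ s)⁻¹ := by
    refine Summable.of_nonneg_of_le
      (fun ℓ => inv_nonneg.mpr (Real.rpow_nonneg (sqnormZ_nonneg d ℓ.1) s)) (fun ℓ => ?_)
      ((hw.comp_injective Subtype.val_injective).mul_left 2)
    have hQ1 : 1 ≤ sqnormZ d ℓ.1 := one_le_sqnormZ d ℓ.2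
    have hQs : 1 ≤ sqnormZ d ℓ.1 ^ s := Real.one_le_rpow hQ1 hs0.le
    have h1 : 0 < sqnormZ d ℓ.1 ^ s := by linarith
    have h2 : 0 < 1 + sqnormZ d ℓ.1 ^ s := by linarith
    rw [Function.comp_apply, inv_eq_one_div, inv_eq_one_div, mul_one_div, div_le_div_iff₀ h1 h2]
    linarith
  set S : ℝ := ∑' ℓ : {ℓ : Fin d → ℤ // ℓ ≠ 0}, (sqnormZ d ℓ.1 ^ s)⁻¹ with hSdef
  have hS0 : 0 ≤ S := tsum_nonneg fun ℓ => inv_nonneg.mpr (Real.rpow_nonneg (sqnormZ_nonneg d ℓ.1) s)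
  set C : ℝ := (4 * (d : ℝ)) ^ s * ((N : ℝ) ^ (2 * s))⁻¹ with hCdef
  have hC0 : 0 ≤ C := mul_nonneg (Real.rpow_nonneg (by positivity) s)
    (inv_nonneg.mpr (Real.rpow_nonneg (Nat.cast_nonneg N) _))
  -- the per-k tail sum
  set T : (Fin d → ℤ) → ℝ := fun k =>
    ∑' ℓ : {ℓ : Fin d → ℤ // ℓ ≠ 0}, W (k + N • ℓ.1) * ‖vhat (k + N • ℓ.1)‖ ^ 2 with hTdef
  have hinjk : ∀ k : Fin d → ℤ,
      Function.Injective (fun ℓ : {ℓ : Fin d → ℤ // ℓ ≠ 0} => k + N • ℓ.1) :=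
    fun k => (smul_add_injective d N hN0 k).comp Subtype.val_injective
  have hTsum : ∀ k : Fin d → ℤ,
      Summable fun ℓ : {ℓ : Fin d → ℤ // ℓ ≠ 0} => W (k + N • ℓ.1) * ‖vhat (k + N • ℓ.1)‖ ^ 2 :=
    fun k => hHs.comp_injective (hinjk k)
  have hT0 : ∀ k, 0 ≤ T k := fun k => tsum_nonneg fun ℓ => mul_nonneg (hWpos _).le (sq_nonneg _)
  -- claim 1 : pointwise bound
  have claim1 : ∀ k ∈ symmPi d K,
      ‖dft d N (fun n => v (gridPt d N n)) k - vhat k‖ ^ 2 ≤ C * S * T k := by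
    intro k hk
    rw [err_eq d N hN0 v vhat hnorm hrep k]
    set f : {ℓ : Fin d → ℤ // ℓ ≠ 0} → ℝ := fun ℓ => Real.sqrt ((W (k + N • ℓ.1))⁻¹) with hfdef
    set g : {ℓ : Fin d → ℤ // ℓ ≠ 0} → ℝ :=
      fun ℓ => Real.sqrt (W (k + N • ℓ.1)) * ‖vhat (k + N • ℓ.1)‖ with hgdef
    have hf0 : ∀ ℓ, 0 ≤ f ℓ := fun ℓ => Real.sqrt_nonneg _
    have hg0 : ∀ ℓ, 0 ≤ g ℓ := fun ℓ => mul_nonneg (Real.sqrt_nonneg _) (norm_nonneg _)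
    have hfg : ∀ ℓ, ‖vhat (k + N • ℓ.1)‖ = f ℓ * g ℓ := by
      intro ℓ
      rw [hfdef, hgdef]
      simp only
      rw [← mul_assoc, ← Real.sqrt_mul (inv_nonneg.mpr (hWpos _).le),
        inv_mul_cancel₀ (hWpos _).ne', Real.sqrt_one, one_mul]
    have hf2 : ∀ ℓ, f ℓ ^ 2 = (W (k + N • ℓ.1))⁻¹ := fun ℓ =>
      Real.sq_sqrt (inv_nonneg.mpr (hWpos _).le)
    have hg2 : ∀ ℓ, g ℓ ^ 2 = W (k + N • ℓ.1) * ‖vhat (k + N • ℓ.1)‖ ^ 2 := fun ℓ => by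
      rw [hgdef]; simp only; rw [mul_pow, Real.sq_sqrt (hWpos _).le]
    have hwb : ∀ ℓ : {ℓ : Fin d → ℤ // ℓ ≠ 0}, f ℓ ^ 2 ≤ C * (sqnormZ d ℓ.1 ^ s)⁻¹ := by
      intro ℓ
      rw [hf2 ℓ, hCdef]
      exact weight_bound d N K hd s hs0 hK hKN k hk ℓ.2
    have hsf2 : Summable fun ℓ => f ℓ ^ 2 := by
      refine Summable.of_nonneg_of_le (fun ℓ => sq_nonneg _) hwb (hB.mul_left C)
    have hsg2 : Summable fun ℓ => g ℓ ^ 2 := by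
      refine (hTsum k).congr fun ℓ => (hg2 ℓ).symm
    have hnorm' : Summable fun ℓ : {ℓ : Fin d → ℤ // ℓ ≠ 0} => ‖vhat (k + N • ℓ.1)‖ :=
      hnorm.comp_injective (hinjk k)
    have step1 : ‖∑' ℓ : {ℓ : Fin d → ℤ // ℓ ≠ 0}, vhat (k + N • ℓ.1)‖
        ≤ ∑' ℓ, f ℓ * g ℓ := by
      calc ‖∑' ℓ : {ℓ : Fin d → ℤ // ℓ ≠ 0}, vhat (k + N • ℓ.1)‖
          ≤ ∑' ℓ : {ℓ : Fin d → ℤ // ℓ ≠ 0}, ‖vhat (k + N • ℓ.1)‖ :=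
            norm_tsum_le_tsum_norm hnorm'
        _ = ∑' ℓ, f ℓ * g ℓ := tsum_congr hfg
    have hfgnn : 0 ≤ ∑' ℓ, f ℓ * g ℓ :=
      tsum_nonneg fun ℓ => mul_nonneg (hf0 ℓ) (hg0 ℓ)
    have step2 : (∑' ℓ, f ℓ * g ℓ) ^ 2 ≤ (∑' ℓ, f ℓ ^ 2) * (∑' ℓ, g ℓ ^ 2) :=
      tsum_cauchy_schwarz f g hf0 hg0 hsf2 hsg2
    have step3 : (∑' ℓ, f ℓ ^ 2) ≤ C * S := by
      calc (∑' ℓ, f ℓ ^ 2) ≤ ∑' ℓ : {ℓ : Fin d → ℤ // ℓ ≠ 0}, C * (sqnormZ d ℓ.1 ^ s)⁻¹ :=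
            Summable.tsum_le_tsum hwb hsf2 (hB.mul_left C)
        _ = C * S := by rw [tsum_mul_left]
    have step4 : (∑' ℓ, g ℓ ^ 2) = T k := tsum_congr hg2
    have hf2nn : 0 ≤ ∑' ℓ, f ℓ ^ 2 := tsum_nonneg fun ℓ => sq_nonneg _
    calc ‖∑' ℓ : {ℓ : Fin d → ℤ // ℓ ≠ 0}, vhat (k + N • ℓ.1)‖ ^ 2
        ≤ (∑' ℓ, f ℓ * g ℓ) ^ 2 := by
          have := norm_nonneg (∑' ℓ : {ℓ : Fin d → ℤ // ℓ ≠ 0}, vhat (k + N • ℓ.1))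
          nlinarith [step1]
      _ ≤ (∑' ℓ, f ℓ ^ 2) * (∑' ℓ, g ℓ ^ 2) := step2
      _ ≤ (C * S) * T k := by
          rw [step4]
          exact mul_le_mul_of_nonneg_right step3 (hT0 k)
  -- claim 2 : the tail sums rearrange into H
  have claim2 : ∑ k ∈ symmPi d K, T k ≤ H := by
    set e : (↥(symmPi d K)) × {ℓ : Fin d → ℤ // ℓ ≠ 0} → (Fin d → ℤ) :=
      fun p => p.1.1 + N • p.2.1 with hedef
    have he : Function.Injective e := by
      rintro ⟨⟨a, ha⟩, ⟨b, hb⟩⟩ ⟨⟨a', ha'⟩, ⟨b', hb'⟩⟩ hab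
      have hcoord : ∀ i, a i + (N : ℤ) * b i = a' i + (N : ℤ) * b' i := by
        intro i
        have := congrFun hab i
        simpa [hedef, nsmul_eq_mul] using this
      have hbnd := symm_bounds d K a ha
      have hbnd' := symm_bounds d K a' ha'
      have heq : ∀ i, a i = a' i ∧ b i = b' i := by
        intro i
        have h1 : a i - a' i = (N : ℤ) * (b' i - b i) := by
          have := hcoord i; ring_nf; ring_nf at this; linarith
        have hb0 : b' i - b i = 0 := by
          by_contra hne
          have h2 : 1 ≤ |b' i - b i| := Int.one_le_abs hne
          have h3 : (N : ℤ) ≤ |(N : ℤ) * (b' i - b i)| := by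
            rw [abs_mul, abs_of_nonneg (by positivity : (0:ℤ) ≤ (N:ℤ))]
            nlinarith [h2, (by exact_mod_cast hN0.le : (0:ℤ) ≤ (N:ℤ))]
          rw [← h1] at h3
          have h4 := (hbnd i).1
          have h5 := (hbnd i).2
          have h6 := (hbnd' i).1
          have h7 := (hbnd' i).2
          rcases le_abs.mp h3 with h | h <;> omega
        constructor
        · have : a i - a' i = 0 := by rw [h1, hb0, mul_zero]
          omega
        · omega
      have ha'' : a = a' := funext fun i => (heq i).1
      have hb'' : b = b' := funext fun i => (heq i).2
      subst ha''; subst hb''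
      rfl
    have hF : Summable fun p : (↥(symmPi d K)) × {ℓ : Fin d → ℤ // ℓ ≠ 0} =>
        W (e p) * ‖vhat (e p)‖ ^ 2 := hHs.comp_injective he
    have hslice : ∀ b : ↥(symmPi d K),
        Summable fun c : {ℓ : Fin d → ℤ // ℓ ≠ 0} => W (e (b, c)) * ‖vhat (e (b, c))‖ ^ 2 :=
      fun b => hTsum b.1
    have hprod : ∑' p : (↥(symmPi d K)) × {ℓ : Fin d → ℤ // ℓ ≠ 0}, W (e p) * ‖vhat (e p)‖ ^ 2
        = ∑' b : ↥(symmPi d K), T b.1 := by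
      rw [Summable.tsum_prod' hF hslice]
    have hle : ∑' p : (↥(symmPi d K)) × {ℓ : Fin d → ℤ // ℓ ≠ 0}, W (e p) * ‖vhat (e p)‖ ^ 2
        ≤ H := by
      refine Summable.tsum_le_tsum_of_inj e he
        (fun m _ => mul_nonneg (hWpos m).le (sq_nonneg _)) (fun p => le_rfl) hF hHs
    calc ∑ k ∈ symmPi d K, T k = ∑ b : ↥(symmPi d K), T b.1 :=
          (Finset.sum_coe_sort (symmPi d K) T).symm
      _ = ∑' b : ↥(symmPi d K), T b.1 := (tsum_fintype _).symm
      _ = ∑' p : (↥(symmPi d K)) × {ℓ : Fin d → ℤ // ℓ ≠ 0}, W (e p) * ‖vhat (e p)‖ ^ 2 :=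
          hprod.symm
      _ ≤ H := hle
  -- put it together
  have main : ∑ k ∈ symmPi d K, ‖dft d N (fun n => v (gridPt d N n)) k - vhat k‖ ^ 2
      ≤ ((4 * (d : ℝ)) ^ s * S) * ((N : ℝ) ^ (-s)) ^ 2 * H := by
    have h1 : ∑ k ∈ symmPi d K, ‖dft d N (fun n => v (gridPt d N n)) k - vhat k‖ ^ 2
        ≤ ∑ k ∈ symmPi d K, C * S * T k := Finset.sum_le_sum claim1
    have h2 : ∑ k ∈ symmPi d K, C * S * T k = C * S * ∑ k ∈ symmPi d K, T k := by
      rw [← Finset.mul_sum]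
    have h3 : C * S * ∑ k ∈ symmPi d K, T k ≤ C * S * H :=
      mul_le_mul_of_nonneg_left claim2 (mul_nonneg hC0 hS0)
    have hNs : ((N : ℝ) ^ (-s)) ^ 2 = ((N : ℝ) ^ (2 * s))⁻¹ := by
      rw [← Real.rpow_natCast ((N : ℝ) ^ (-s)) 2, ← Real.rpow_mul (Nat.cast_nonneg N),
        ← Real.rpow_neg (Nat.cast_nonneg N)]
      norm_num
      ring_nf
    rw [hNs]
    calc ∑ k ∈ symmPi d K, ‖dft d N (fun n => v (gridPt d N n)) k - vhat k‖ ^ 2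
        ≤ C * S * H := by linarith [h1, h2 ▸ h1, h3]
      _ = ((4 * (d : ℝ)) ^ s * S) * ((N : ℝ) ^ (2 * s))⁻¹ * H := by rw [hCdef]; ring
  have hA0 : (0:ℝ) ≤ (4 * (d : ℝ)) ^ s * S := mul_nonneg (Real.rpow_nonneg (by positivity) s) hS0
  have hsq : (0:ℝ) ≤ ((N : ℝ) ^ (-s)) ^ 2 := sq_nonneg _
  calc Real.sqrt (∑ k ∈ symmPi d K, ‖dft d N (fun n => v (gridPt d N n)) k - vhat k‖ ^ 2)
      ≤ Real.sqrt (((4 * (d : ℝ)) ^ s * S) * ((N : ℝ) ^ (-s)) ^ 2 * H) := Real.sqrt_le_sqrt main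
    _ = Real.sqrt ((4 * (d : ℝ)) ^ s * S) * Real.sqrt (((N : ℝ) ^ (-s)) ^ 2) * Real.sqrt H := by
        rw [Real.sqrt_mul (mul_nonneg hA0 hsq) H, Real.sqrt_mul hA0]
    _ = Real.sqrt ((4 * (d : ℝ)) ^ s * S) * (N : ℝ) ^ (-s) * Real.sqrt H := by
        rw [Real.sqrt_sq (Real.rpow_nonneg (Nat.cast_nonneg N) (-s))]

end
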